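/- Let G be a finite group acting on finite sets S and A, and let R : S × A → ℝ and T : S × A × S → ℝ satisfy R(g·s, g·a) = R(s,a) and T(g·s, g·a, g·s') = T(s,a,s') for all g ∈ G. Define the Bellman operator (BQ)(s,a) = R(s,a) + γ · max over a' of Σ_{s'} T(s,a,s')·Q(s',a'), with 0 ≤ γ. Then B maps G-invariant functions Q (i.e. Q(g·s,g·a)=Q(s,a)) to G-invariant functions. -/
import Mathlib


theorem stmt2 {G S A : Type*} [Group G] [Fintype G] [Fintype S] [Fintype A]
    [Nonempty S] [Nonempty A] [MulAction G S] [MulAction G A]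
    (R : S → A → ℝ) (T : S → A → S → ℝ) (γ : ℝ) (hγ : 0 ≤ γ)
    (hR : ∀ (g : G) (s : S) (a : A), R (g • s) (g • a) = R s a)
    (hT : ∀ (g : G) (s : S) (a : A) (s' : S), T (g • s) (g • a) (g • s') = T s a s')
    (Q : S → A → ℝ) (hQ : ∀ (g : G) (s : S) (a : A), Q (g • s) (g • a) = Q s a) :
    ∀ (g : G) (s : S) (a : A),
      (R (g • s) (g • a) + γ * ⨆ a' : A, ∑ s' : S, T (g • s) (g • a) s' * Q s' a')
        = R s a + γ * ⨆ a' : A, ∑ s' : S, T s a s' * Q s' a' := by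
  intro g s a
  rw [hR]
  congr 2
  have key : ∀ a' : A, ∑ s' : S, T (g • s) (g • a) s' * Q s' a'
      = ∑ s' : S, T s a s' * Q s' (g⁻¹ • a') := by
    intro a'
    rw [← Equiv.sum_comp (MulAction.toPerm g) (fun s' => T (g • s) (g • a) s' * Q s' a')]
    refine Finset.sum_congr rfl fun t _ => ?_
    simp only [MulAction.toPerm_apply]
    rw [hT]
    congr 1
    rw [← hQ g t (g⁻¹ • a'), smul_inv_smul]
  simp only [key]
  have hrange : Set.range (fun a' : A => ∑ s' : S, T s a s' * Q s' (g⁻¹ • a'))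
      = Set.range (fun a' : A => ∑ s' : S, T s a s' * Q s' a') := by
    simpa [Function.comp_def] using Function.Surjective.range_comp
      (MulAction.toPerm (g⁻¹ : G) : Equiv.Perm A).surjective
      (fun a' : A => ∑ s' : S, T s a s' * Q s' a')
  rw [iSup, iSup, hrange]
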